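/- Let R = F_q[x_1,...,x_s] be the quotient ring modulo ⟨X_i^{ρ_i}-1⟩ and S = F_q[x_1,...,x_{s-1}] the corresponding subring in s-1 variables. For k = 0,...,ρ_s-1, let 𝔭_k ∈ R be of the form 𝔭_k = Σ_{h=k}^{ρ_s-1} p_h^{(k)}(x_1,...,x_{s-1}) x_s^h with leading S-coefficient p_k := p_k^{(k)} ≠ 0 of degree a_k (degree in S with respect to the lexicographic order). If l_0,...,l_{ρ_s-1} ∈ S satisfy deg l_k <_+ (ρ_1,...,ρ_{s-1}) - a_k componentwise (or l_k = 0) and Σ_{k=0}^{ρ_s-1} l_k 𝔭_k = 0 in R, then l_k = 0 for all k. -/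

import Mathlib

noncomputable instance lexLO (s : ℕ) : LinearOrder (Lex (Fin s → ℕ)) :=
  have : WellFoundedLT (Fin s) := Finite.to_wellFoundedLT
  @Pi.Lex.linearOrder (Fin s) (fun _ => ℕ) _ this _

/-- Model of `S = F_q[X₁,…,X_{s-1}]/⟨X_i^{ρ_i}-1⟩` as the group algebra of
`∏_{i<s-1} ℤ/ρ_iℤ`. -/
abbrev QR (F : Type) [Field F] {t : ℕ} (ρ : Fin t → ℕ) : Type :=
  AddMonoidAlgebra F (∀ i : Fin t, ZMod (ρ i))

/-- Model of `R = F_q[X₁,…,X_s]/⟨X_i^{ρ_i}-1⟩` (with `ρ_s = m`), splitting off the last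
variable: the group algebra of `(∏_{i<s-1} ℤ/ρ_iℤ) × ℤ/mℤ`. -/
abbrev QRx (F : Type) [Field F] {t : ℕ} (ρ : Fin t → ℕ) (m : ℕ) : Type :=
  AddMonoidAlgebra F ((∀ i : Fin t, ZMod (ρ i)) × ZMod m)

/-- The inclusion of the subring `S = F_q[x₁,…,x_{s-1}]` into `R`. -/
noncomputable def emb (F : Type) [Field F] {t : ℕ} (ρ : Fin t → ℕ) (m : ℕ) :
    QR F ρ →+* QRx F ρ m :=
  AddMonoidAlgebra.mapDomainRingHom F (AddMonoidHom.inl _ (ZMod m))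

/-- The monomial `x_s^h` in `R`. -/
noncomputable def xs (F : Type) [Field F] {t : ℕ} (ρ : Fin t → ℕ) {m : ℕ} (h : Fin m) :
    QRx F ρ m :=
  AddMonoidAlgebra.single (0, ((h : ℕ) : ZMod m)) 1

/-- The degree of a nonzero element of `S`: the lexicographically largest exponent tuple
with nonzero coefficient. -/
noncomputable def deg {F : Type} [Field F] {t : ℕ} {ρ : Fin t → ℕ}
    (f : QR F ρ) (hf : f ≠ 0) : Fin t → ℕ :=
  ofLex (f.coeff.support.sup' (by simpa [Finsupp.support_nonempty_iff] using hf)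
    (fun α => toLex fun i => (α i).val))

/-- From `toLex A ≤ toLex B` and equality below `i`, deduce `A i ≤ B i`. -/
lemma lex_le_point {t : ℕ} {A B : Fin t → ℕ} (h : toLex A ≤ toLex B)
    (i : Fin t) (hbelow : ∀ k < i, A k = B k) : A i ≤ B i := by
  rcases h.lt_or_eq with hlt | heq
  · obtain ⟨j, hj, hjlt⟩ := hlt
    rcases lt_trichotomy i j with h1 | rfl | h1
    · exact le_of_eq (hj i h1)
    · exact le_of_lt hjlt
    · exact absurd (hbelow j h1) (ne_of_lt hjlt)
  · exact le_of_eq (congrFun (congrArg ofLex heq) i)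

lemma aux_unique {t : ℕ} {ρ : Fin t → ℕ}
    {df dg A B : Fin t → ℕ}
    (hA : toLex A ≤ toLex df) (hB : toLex B ≤ toLex dg)
    (hbound : ∀ i, df i + dg i < ρ i)
    (hcong : ∀ i, (A i + B i) % ρ i = (df i + dg i) % ρ i) :
    A = df ∧ B = dg := by
  have main : ∀ n : ℕ, ∀ i : Fin t, i.val = n → A i = df i ∧ B i = dg i := by
    intro n
    induction n using Nat.strong_induction_on with
    | _ n ih =>
      intro i hi
      have hbA : ∀ k < i, A k = df k := fun k hk =>
        (ih k.val (hi ▸ hk) k rfl).1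
      have hbB : ∀ k < i, B k = dg k := fun k hk =>
        (ih k.val (hi ▸ hk) k rfl).2
      have h1 : A i ≤ df i := lex_le_point hA i hbA
      have h2 : B i ≤ dg i := lex_le_point hB i hbB
      have h3 : A i + B i < ρ i := lt_of_le_of_lt (add_le_add h1 h2) (hbound i)
      have h4 := hcong i
      rw [Nat.mod_eq_of_lt h3, Nat.mod_eq_of_lt (hbound i)] at h4
      omega
  exact ⟨funext fun i => (main i.val i rfl).1, funext fun i => (main i.val i rfl).2⟩

lemma mul_ne_zero_of_deg {F : Type} [Field F] {t : ℕ} {ρ : Fin t → ℕ} [∀ i, NeZero (ρ i)]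
    (f g : QR F ρ) (hf : f ≠ 0) (hg : g ≠ 0)
    (hb : ∀ i, deg f hf i + deg g hg i < ρ i) : f * g ≠ 0 := by
  classical
  have hfs : f.coeff.support.Nonempty := by simpa [Finsupp.support_nonempty_iff] using hf
  have hgs : g.coeff.support.Nonempty := by simpa [Finsupp.support_nonempty_iff] using hg
  obtain ⟨α, hα, hαe⟩ := Finset.exists_mem_eq_sup' hfs (fun α => toLex fun i => (α i).val)
  obtain ⟨β, hβ, hβe⟩ := Finset.exists_mem_eq_sup' hgs (fun α => toLex fun i => (α i).val)
  have hdf : deg f hf = fun i => (α i).val := by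
    simp only [deg, hαe]; rfl
  have hdg : deg g hg = fun i => (β i).val := by
    simp only [deg, hβe]; rfl
  have key : (f * g).coeff (α + β) = f.coeff α * g.coeff β := by
    rw [AddMonoidAlgebra.coeff_mul, Finsupp.sum]
    rw [Finset.sum_eq_single α]
    · rw [Finsupp.sum, Finset.sum_eq_single β]
      · rw [if_pos rfl]
      · intro b hb' hne
        rw [if_neg]
        intro hab
        apply hne
        have hA : toLex (fun i => (α i).val) ≤ toLex (deg f hf) := le_of_eq (by rw [hdf])
        have hB : toLex (fun i => (b i).val) ≤ toLex (deg g hg) := by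
          rw [deg, toLex_ofLex]; exact Finset.le_sup' (fun α => toLex fun i => (α i).val) hb'
        have hcong : ∀ i, ((α i).val + (b i).val) % ρ i = (deg f hf i + deg g hg i) % ρ i := by
          intro i
          have h1 : (α i + b i) = (α i + β i) := congrFun hab i
          have h2 := congrArg ZMod.val h1
          rw [ZMod.val_add, ZMod.val_add] at h2
          rw [h2, hdf, hdg]
        obtain ⟨_, hB'⟩ := aux_unique hA hB hb hcong
        funext i
        apply ZMod.val_injective
        rw [congrFun hB' i, congrFun hdg i]
      · intro h; exact absurd hβ h
    · intro a ha' hne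
      rw [Finsupp.sum]
      apply Finset.sum_eq_zero
      intro b hb'
      rw [if_neg]
      intro hab
      apply hne
      -- uniqueness
      have hA : toLex (fun i => (a i).val) ≤ toLex (deg f hf) := by
        rw [deg, toLex_ofLex]; exact Finset.le_sup' (fun α => toLex fun i => (α i).val) ha'
      have hB : toLex (fun i => (b i).val) ≤ toLex (deg g hg) := by
        rw [deg, toLex_ofLex]; exact Finset.le_sup' (fun α => toLex fun i => (α i).val) hb'
      have hcong : ∀ i, ((a i).val + (b i).val) % ρ i = (deg f hf i + deg g hg i) % ρ i := by
        intro i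
        have : (a i + b i) = (α i + β i) := congrFun hab i
        have := congrArg ZMod.val this
        rw [ZMod.val_add, ZMod.val_add] at this
        rw [this, hdf, hdg]
      obtain ⟨hA', _⟩ := aux_unique hA hB hb hcong
      funext i
      apply ZMod.val_injective
      rw [congrFun hA' i, congrFun hdf i]
    · intro h; exact absurd hα h
  intro hzero
  rw [hzero] at key
  have h1 : f.coeff α ≠ 0 := Finsupp.mem_support_iff.mp hα
  have h2 : g.coeff β ≠ 0 := Finsupp.mem_support_iff.mp hβ
  exact (mul_ne_zero h1 h2) key.symm

/-- Let `𝔭_k = ∑_{h=k}^{ρ_s-1} p_h^{(k)} x_s^h` for `k = 0,…,ρ_s-1`, with `S`-coefficients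
`p k h`, vanishing for `h < k` and with nonzero leading coefficient `p_k = p k k` of degree
`a_k`. If `l_0,…,l_{ρ_s-1} ∈ S` satisfy `deg l_k <₊ (ρ₁,…,ρ_{s-1}) - a_k` componentwise
(or `l_k = 0`) and `∑_k l_k 𝔭_k = 0` in `R`, then all `l_k = 0`. -/
theorem eq_zero_of_comb_eq_zero {F : Type} [Field F] {t : ℕ} {ρ : Fin t → ℕ} {m : ℕ}
    [NeZero m] [∀ i, NeZero (ρ i)]
    (p : Fin m → Fin m → QR F ρ)
    (hlead : ∀ k, p k k ≠ 0)
    (hsupp : ∀ k h, h < k → p k h = 0)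
    (l : Fin m → QR F ρ)
    (hdeg : ∀ k, l k = 0 ∨ ∃ hlk : l k ≠ 0,
      ∀ i, deg (l k) hlk i + deg (p k k) (hlead k) i < ρ i)
    (hzero : ∑ k, emb F ρ m (l k) * (∑ h, emb F ρ m (p k h) * xs F ρ h) = 0) :
    ∀ k, l k = 0 := by
  classical
  have hz2 : (∑ k, ∑ h, emb F ρ m (l k * p k h) * xs F ρ h) = 0 := by
    rw [← hzero]
    refine Finset.sum_congr rfl fun k _ => ?_
    rw [Finset.mul_sum]
    refine Finset.sum_congr rfl fun h _ => ?_
    rw [map_mul, mul_assoc]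
  have hterm : ∀ (w : QR F ρ) (h c : Fin m) (g : ∀ i, ZMod (ρ i)),
      (emb F ρ m w * xs F ρ h).coeff (g, ((c : ℕ) : ZMod m)) = if h = c then w.coeff g else 0 := by
    intro w h c g
    rw [xs, AddMonoidAlgebra.coeff_mul_single_apply, mul_one, ← sub_eq_add_neg]
    have hsub : ((g, ((c : ℕ) : ZMod m)) - (0, ((h : ℕ) : ZMod m)) :
        (∀ i : Fin t, ZMod (ρ i)) × ZMod m) =
        (g, ((c : ℕ) : ZMod m) - ((h : ℕ) : ZMod m)) := by
      simp [Prod.ext_iff]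
    rw [hsub]
    have hinj : Function.Injective (⇑(AddMonoidHom.inl (∀ i : Fin t, ZMod (ρ i)) (ZMod m))) := by
      intro a b hab
      exact (Prod.ext_iff.mp hab).1
    by_cases hch : h = c
    · subst hch
      rw [sub_self]
      rw [if_pos rfl]
      have : ((g, (0 : ZMod m)) : (∀ i : Fin t, ZMod (ρ i)) × ZMod m) =
          (AddMonoidHom.inl (∀ i : Fin t, ZMod (ρ i)) (ZMod m)) g := rfl
      rw [this]
      exact Finsupp.mapDomain_apply hinj w.coeff g
    · rw [if_neg hch]
      refine Finsupp.mapDomain_notin_range (f := ⇑(AddMonoidHom.inl (∀ i : Fin t, ZMod (ρ i)) (ZMod m))) w.coeff _ ?_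
      rintro ⟨x, hx⟩
      have h2 : ((c : ℕ) : ZMod m) - ((h : ℕ) : ZMod m) = 0 := (Prod.ext_iff.mp hx).2.symm
      have h3 : ((c : ℕ) : ZMod m) = ((h : ℕ) : ZMod m) := by
        rwa [sub_eq_zero] at h2
      apply hch
      apply Fin.ext
      have := congrArg ZMod.val h3
      rwa [ZMod.val_cast_of_lt c.isLt, ZMod.val_cast_of_lt h.isLt, eq_comm] at this
  have key : ∀ c : Fin m, ∑ k, l k * p k c = 0 := by
    intro c
    ext g
    have hz3 : (∑ k, ∑ h, emb F ρ m (l k * p k h) * xs F ρ h).coeff (g, ((c : ℕ) : ZMod m)) = 0 := by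
      rw [hz2]; rfl
    rw [AddMonoidAlgebra.coeff_sum, Finset.sum_apply'] at hz3
    have hz4 : ∀ k : Fin m, (∑ h, emb F ρ m (l k * p k h) * xs F ρ h).coeff (g, ((c : ℕ) : ZMod m))
        = (l k * p k c).coeff g := by
      intro k
      rw [AddMonoidAlgebra.coeff_sum, Finset.sum_apply']
      calc (∑ h, (emb F ρ m (l k * p k h) * xs F ρ h).coeff (g, ((c : ℕ) : ZMod m)))
          = ∑ h, if h = c then (l k * p k h).coeff g else 0 :=
            Finset.sum_congr rfl fun h _ => hterm _ h c g
        _ = (l k * p k c).coeff g := by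
            rw [Finset.sum_ite_eq' Finset.univ c (fun h => (l k * p k h).coeff g)]
            simp
    rw [Finset.sum_congr rfl fun k _ => hz4 k] at hz3
    rw [AddMonoidAlgebra.coeff_sum, Finset.sum_apply']
    simpa using hz3
  have main : ∀ n : ℕ, ∀ k : Fin m, k.val = n → l k = 0 := by
    intro n
    induction n using Nat.strong_induction_on with
    | _ n ih =>
      intro k hk
      by_contra hne
      obtain ⟨hlk, hdegk⟩ := (hdeg k).resolve_left hne
      have h0 : ∑ j, l j * p j k = 0 := key k
      have heq : ∑ j, l j * p j k = l k * p k k := by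
        apply Finset.sum_eq_single
        · intro j _ hj
          rcases lt_or_gt_of_ne hj with h | h
          · rw [ih j.val (hk ▸ h) j rfl, zero_mul]
          · rw [hsupp j k h, mul_zero]
        · intro h; exact absurd (Finset.mem_univ k) h
      rw [heq] at h0
      exact mul_ne_zero_of_deg _ _ hlk (hlead k) hdegk h0
  exact fun k => main k.val k rfl
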